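/- For a Markoff triple of the form (1, F_{2n+1}, F_{2n−1}) with n ≥ 2 (F_i Fibonacci numbers), the weights are (0, F_{2n−1}, F_{2n−3}) and the coweights are (1, F_{2n−3}, F_{2n−5}). -/

import Mathlib

lemma fibsum (k : ℕ) : (Nat.fib (k+2) : ℤ) = Nat.fib (k+1) + Nat.fib k := by
  rw [Nat.fib_add_two]; push_cast; ring

lemma cassiniZ (k : ℕ) : (Nat.fib (k+1) : ℤ)^2 - Nat.fib k * Nat.fib (k+2) = (-1)^k := by
  induction k with
  | zero => simp
  | succ k ih =>
    have h2 := fibsum k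
    have h3 := fibsum (k+1)
    rw [show k+1+1 = k+2 by ring, show k+1+2 = (k+1)+2 by ring]
    linear_combination (Nat.fib (k+2) : ℤ) * h2 + (-(Nat.fib (k+1) : ℤ)) * h3 + (-1) * ih

lemma cat2 (k : ℕ) : (Nat.fib (k+2) : ℤ)^2 = Nat.fib k * Nat.fib (k+4) + (-1)^k := by
  have h2 := fibsum k
  have h3 := fibsum (k+1)
  have h4 := fibsum (k+2)
  rw [show k+1+2 = k+3 by ring] at h3
  rw [show k+2+2 = k+4 by ring, show k+2+1 = k+3 by ring] at h4
  linear_combination (-(Nat.fib k : ℤ)) * h4 + (-(Nat.fib k : ℤ)) * h3 +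
    ((Nat.fib (k+2) : ℤ) + Nat.fib (k+1)) * h2 + cassiniZ k

/-- Odd-index Catalan identity: `fib(k+2)² + 1 = fib k · fib (k+4)` for odd exponent sign. -/
lemma cat2odd (k : ℕ) :
    (Nat.fib (2*k+3) : ℤ)^2 + 1 = Nat.fib (2*k+1) * Nat.fib (2*k+5) := by
  have h := cat2 (2*k+1)
  rw [show 2*k+1+2 = 2*k+3 by ring, show 2*k+1+4 = 2*k+5 by ring] at h
  have hs : ((-1 : ℤ))^(2*k+1) = -1 := by
    rw [pow_succ, pow_mul]; norm_num
  rw [hs] at h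
  linarith

lemma small_eq {g d : ℤ} (hdvd : g ∣ d) (h1 : -g < d) (h2 : d < g) : d = 0 := by
  rcases hdvd with ⟨c, rfl⟩
  have hg : 0 < g := by linarith
  rcases lt_trichotomy c 0 with hc | hc | hc
  · have : g * c ≤ g * (-1) := by
      apply mul_le_mul_of_nonneg_left (by omega) (le_of_lt hg)
    nlinarith
  · simp [hc]
  · have : g * 1 ≤ g * c := by
      apply mul_le_mul_of_nonneg_left (by omega) (le_of_lt hg)
    nlinarith

/-- For a Markoff triple `(1, F_{2n+1}, F_{2n-1})` with `n ≥ 2`, the weights are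
`(0, F_{2n-1}, F_{2n-3})` and the coweights are `(1, F_{2n-3}, F_{2n-5})`
(for `n = 2` we interpret `F_{-1} = F_{2n-3} - F_{2n-4} = 1`). -/
theorem markoff_fibonacci_weights (n : ℕ) (hn : 2 ≤ n)
    (e g f r_e r_g r_f s_e s_g s_f : ℤ)
    (he : e = 1) (hg : g = Nat.fib (2 * n + 1)) (hf : f = Nat.fib (2 * n - 1))
    (hre0 : 0 ≤ r_e) (hre1 : r_e < e) (hre : e ∣ f * r_e - g)
    (hrf0 : 0 ≤ r_f) (hrf1 : r_f < f) (hrf : f ∣ g * r_f - e)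
    (hrg0 : 0 ≤ r_g) (hrg1 : r_g < g) (hrg : g ∣ e * r_g - f)
    (hse : r_e ^ 2 = -1 + s_e * e)
    (hsf : r_f ^ 2 = -1 + s_f * f)
    (hsg : r_g ^ 2 = -1 + s_g * g) :
    r_e = 0 ∧ r_g = Nat.fib (2 * n - 1) ∧ r_f = Nat.fib (2 * n - 3) ∧
      s_e = 1 ∧ s_g = Nat.fib (2 * n - 3) ∧
      s_f = (Nat.fib (2 * n - 3) : ℤ) - Nat.fib (2 * n - 4) := by
  obtain ⟨m, rfl⟩ : ∃ m, n = m + 2 := ⟨n - 2, by omega⟩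
  subst he
  rw [show 2 * (m+2) + 1 = 2*m+5 by ring] at hg
  rw [show 2 * (m+2) - 1 = 2*m+3 by omega] at hf
  rw [show 2 * (m+2) - 1 = 2*m+3 by omega, show 2 * (m+2) - 3 = 2*m+1 by omega,
    show 2 * (m+2) - 4 = 2*m by omega]
  -- basic positivity / monotonicity
  have hp1 : 0 < Nat.fib (2*m+1) := Nat.fib_pos.mpr (by omega)
  have hp2 : 0 < Nat.fib (2*m+2) := Nat.fib_pos.mpr (by omega)
  have hp4 : 0 < Nat.fib (2*m+4) := Nat.fib_pos.mpr (by omega)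
  have hlt1 : Nat.fib (2*m+1) < Nat.fib (2*m+3) := by
    have h := Nat.fib_add_two (n := 2*m+1)
    rw [show 2*m+1+2 = 2*m+3 by ring, show 2*m+1+1 = 2*m+2 by ring] at h
    omega
  have hlt2 : Nat.fib (2*m+3) < Nat.fib (2*m+5) := by
    have h := Nat.fib_add_two (n := 2*m+3)
    rw [show 2*m+3+2 = 2*m+5 by ring, show 2*m+3+1 = 2*m+4 by ring] at h
    omega
  have hfpos : (0:ℤ) < f := by rw [hf]; exact_mod_cast Nat.cast_pos.mpr (Nat.fib_pos.mpr (by omega))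
  have hgpos : (0:ℤ) < g := by rw [hg]; exact_mod_cast Nat.cast_pos.mpr (Nat.fib_pos.mpr (by omega))
  -- r_e and s_e
  have hre' : r_e = 0 := by omega
  have hse' : s_e = 1 := by rw [hre'] at hse; norm_num at hse; linarith
  -- r_g = f
  have hfg : f < g := by rw [hf, hg]; exact_mod_cast hlt2
  have hrg' : r_g = Nat.fib (2*m+3) := by
    have hd : g ∣ r_g - f := by simpa using hrg
    have h0 : r_g - f = 0 := small_eq hd (by linarith) (by linarith)
    rw [← hf]; linarith
  -- key identity
  have c1 := cat2odd m
  -- s_g = fib (2m+1)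
  have hsg' : s_g = Nat.fib (2*m+1) := by
    have h : s_g * g = (Nat.fib (2*m+1) : ℤ) * g := by
      rw [hg]; rw [hrg', hg] at hsg; linarith
    exact mul_right_cancel₀ (ne_of_gt hgpos) h
  -- r_f = fib (2m+1)
  have hrf' : r_f = Nat.fib (2*m+1) := by
    have k1 : f ∣ g * (Nat.fib (2*m+1) : ℤ) - 1 := by
      rw [hf, hg]
      exact ⟨(Nat.fib (2*m+3) : ℤ), by linear_combination (-1) * c1⟩
    have k2 : f ∣ g * (r_f - Nat.fib (2*m+1)) := by
      have := dvd_sub hrf k1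
      rw [show g * (r_f - Nat.fib (2*m+1)) = g * r_f - 1 - (g * Nat.fib (2*m+1) - 1) by ring]
      exact this
    -- replace g by fib(2m+4) mod f
    have hg5 : (Nat.fib (2*m+5) : ℤ) = Nat.fib (2*m+4) + Nat.fib (2*m+3) := by
      have := fibsum (2*m+3)
      rw [show 2*m+3+2 = 2*m+5 by ring, show 2*m+3+1 = 2*m+4 by ring] at this
      exact this
    have k3 : f ∣ (Nat.fib (2*m+4) : ℤ) * (r_f - Nat.fib (2*m+1)) := by
      have : (Nat.fib (2*m+4) : ℤ) * (r_f - Nat.fib (2*m+1)) =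
          g * (r_f - Nat.fib (2*m+1)) - f * (r_f - Nat.fib (2*m+1)) := by
        rw [hg, hg5, hf]; ring
      rw [this]
      exact dvd_sub k2 ⟨r_f - Nat.fib (2*m+1), rfl⟩
    have hcop : IsCoprime f ((Nat.fib (2*m+4) : ℤ)) := by
      rw [hf]
      rw [Int.isCoprime_iff_gcd_eq_one]
      have := Nat.fib_coprime_fib_succ (2*m+3)
      rw [show 2*m+3+1 = 2*m+4 by ring] at this
      simpa [Int.gcd_natCast_natCast] using this
    have hd : f ∣ r_f - Nat.fib (2*m+1) := hcop.dvd_of_dvd_mul_left k3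
    have hflt : (Nat.fib (2*m+1) : ℤ) < f := by rw [hf]; exact_mod_cast hlt1
    have h0 : r_f - Nat.fib (2*m+1) = 0 := by
      refine small_eq hd (by linarith) (by linarith)
    linarith
  -- s_f
  have hsf' : s_f = (Nat.fib (2*m+1) : ℤ) - Nat.fib (2*m) := by
    rw [hrf', hf] at hsf
    have key : s_f * (Nat.fib (2*m+3) : ℤ) =
        ((Nat.fib (2*m+1) : ℤ) - Nat.fib (2*m)) * Nat.fib (2*m+3) := by
      rcases m with _ | m'
      · norm_num [Nat.fib] at hsf ⊢
        linarith
      · have c := cat2odd m'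
        rw [show 2*m'+3 = 2*(m'+1)+1 by ring, show 2*m'+5 = 2*(m'+1)+3 by ring] at c
        have hs := fibsum (2*m'+1)
        rw [show 2*m'+1+2 = 2*(m'+1)+1 by ring, show 2*m'+1+1 = 2*(m'+1) by ring] at hs
        linear_combination (-1) * hsf + c + (-(Nat.fib (2*(m'+1)+3) : ℤ)) * hs
    have hne : ((Nat.fib (2*m+3) : ℤ)) ≠ 0 :=
      Int.natCast_ne_zero.mpr (Nat.fib_pos.mpr (by omega)).ne'
    exact mul_right_cancel₀ hne key
  exact ⟨hre', hrg', hrf', hse', hsg', hsf'⟩
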